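/- Let d ≥ 1, let q_1, …, q_d be positive integers, let R_1, …, R_d be positive real numbers, for each ℓ let G_ℓ be a holomorphic function on the open disc D(0, R_ℓ) ⊂ ℂ, and for each N ∈ ℕ^* let (h(N, ν))_{0 ≤ ν ≤ N} be a strictly increasing finite sequence of points of [−1,1]. Set V = { (a, x) ∈ ℝ × ℝ^d : (|a| + 2)^{q_ℓ} |x_ℓ| < R_ℓ for ℓ = 1, …, d }. Then the sequence of functions (a, x) ↦ Σ_{ν=0}^N ( Π_{ν'=0, ν'≠ν}^N (a − h(N,ν')) / (h(N,ν) − h(N,ν')) ) Π_{ℓ=1}^d G_ℓ( h(N,ν)^{q_ℓ} x_ℓ ) converges, as N → ∞, to (a, x) ↦ Π_{ℓ=1}^d G_ℓ( a^{q_ℓ} x_ℓ ), uniformly on every compact subset of V. -/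

import Mathlib

open Polynomial Finset

lemma key_ident (n : ℕ) (v : ℕ → ℂ) (hinj : Set.InjOn v (Finset.range n))
    (hn : (Finset.range n).Nonempty)
    (a z : ℂ) (hz : ∀ ν ∈ Finset.range n, z ≠ v ν) (hza : z ≠ a) :
    (∑ ν ∈ Finset.range n, (∏ ν' ∈ (Finset.range n).erase ν,
       ((a - v ν') * (v ν - v ν')⁻¹)) * (z - v ν)⁻¹) - (z - a)⁻¹
    = -((∏ ν ∈ Finset.range n, (a - v ν)) *
        (∏ ν ∈ Finset.range n, (z - v ν))⁻¹ * (z - a)⁻¹) := by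
  set s := Finset.range n with hs
  set ω : ℂ[X] := ∏ ν ∈ s, (X - C (v ν)) with hω
  have hωeval : ∀ t : ℂ, ω.eval t = ∏ ν ∈ s, (t - v ν) := by
    intro t; simp [hω, eval_prod]
  have hωz : ω.eval z ≠ 0 := by
    rw [hωeval]
    exact Finset.prod_ne_zero_iff.2 fun ν hν => sub_ne_zero.2 (hz ν hν)
  set P : ℂ[X] := C (ω.eval z) - ω with hP
  have hmonic : ω.Monic := monic_prod_of_monic _ _ fun ν _ => monic_X_sub_C _
  have hdegω : ω.degree = s.card := by
    rw [hω, degree_prod]; simp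
  have hroot : P.IsRoot z := by simp [hP]
  have hPQ : (X - C z) * (P /ₘ (X - C z)) = P :=
    (mul_divByMonic_eq_iff_isRoot).2 hroot
  set Q : ℂ[X] := P /ₘ (X - C z) with hQ
  have hdegP : P.degree = s.card := by
    rw [hP, degree_sub_eq_right_of_degree_lt, hdegω]
    rw [hdegω]
    calc (C (ω.eval z)).degree ≤ 0 := degree_C_le
    _ < s.card := by
        exact_mod_cast WithBot.coe_lt_coe.2 (Nat.pos_of_ne_zero
          (fun h0 => (Finset.Nonempty.card_pos hn).ne' h0))
  have hPne : P ≠ 0 := by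
    intro h0
    rw [h0, degree_zero] at hdegP
    exact (by simp : (⊥ : WithBot ℕ) ≠ (s.card : WithBot ℕ)) hdegP
  have hdegQ : Q.degree < s.card := by
    have := degree_divByMonic_lt P (X - C z) hPne (by simp [degree_X_sub_C])
    rwa [hdegP] at this
  have hinterp := Lagrange.eq_interpolate (v := v) (s := s) hinj hdegQ
  have heval := congrArg (Polynomial.eval a) hinterp
  rw [Lagrange.interpolate_apply, eval_finset_sum] at heval
  simp only [eval_mul, eval_C] at heval
  -- key evaluations
  have hQa : (a - z) * Q.eval a = ω.eval z - ω.eval a := by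
    have := congrArg (Polynomial.eval a) hPQ
    simpa [hP] using this
  have hQν : ∀ ν ∈ s, Q.eval (v ν) = ω.eval z * (v ν - z)⁻¹ := by
    intro ν hν
    have h0 : ω.eval (v ν) = 0 := by
      rw [hωeval]; exact Finset.prod_eq_zero hν (by simp)
    have h1 := congrArg (Polynomial.eval (v ν)) hPQ
    simp only [eval_mul, eval_sub, eval_X, eval_C, hP, h0, sub_zero] at h1
    have hvz : v ν - z ≠ 0 := sub_ne_zero.2 fun heq => (hz ν hν) heq.symm
    field_simp
    linear_combination h1
  -- basis evaluation
  have hbasis : ∀ ν ∈ s, Polynomial.eval a (Lagrange.basis s v ν)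
      = ∏ ν' ∈ s.erase ν, ((a - v ν') * (v ν - v ν')⁻¹) := by
    intro ν hν
    rw [Lagrange.basis, eval_prod]
    refine Finset.prod_congr rfl fun ν' _ => ?_
    simp [Lagrange.basisDivisor, mul_comm]
  -- rewrite heval into an identity about T
  set T : ℂ := ∑ ν ∈ s, (∏ ν' ∈ s.erase ν, ((a - v ν') * (v ν - v ν')⁻¹)) * (z - v ν)⁻¹ with hT
  have hsum : ∑ ν ∈ s, Polynomial.eval (v ν) Q * Polynomial.eval a (Lagrange.basis s v ν)
      = -(Polynomial.eval z ω * T) := by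
    rw [hT, Finset.mul_sum, ← Finset.sum_neg_distrib]
    refine Finset.sum_congr rfl fun ν hν => ?_
    rw [hQν ν hν, hbasis ν hν,
      show v ν - z = -(z - v ν) by ring, inv_neg]
    ring
  rw [hsum] at heval
  -- final algebra
  rw [← hωeval a, ← hωeval z]
  have hza' : z - a ≠ 0 := sub_ne_zero.2 hza
  have haz' : a - z ≠ 0 := sub_ne_zero.2 (Ne.symm hza)
  field_simp
  linear_combination hQa - (a-z)*heval


lemma circleIntegral_finset_sum {ι : Type*} (t : Finset ι) (f : ι → ℂ → ℂ) (c : ℂ) (R : ℝ)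
    (h : ∀ i ∈ t, CircleIntegrable (f i) c R) :
    (∮ z in C(c, R), ∑ i ∈ t, f i z) = ∑ i ∈ t, ∮ z in C(c, R), f i z := by
  simp only [circleIntegral, Finset.smul_sum]
  rw [intervalIntegral.integral_finset_sum]
  intro i hi; exact (h i hi).out

open Metric Real in
set_option maxHeartbeats 1000000 in
lemma core_est (n : ℕ) (hn : 0 < n) (x : ℕ → ℝ)
    (hx : ∀ ν ∈ Finset.range n, |x ν| ≤ 1)
    (hinj : Set.InjOn (fun ν : ℕ => ((x ν : ℂ))) (Finset.range n))
    (a r Mb : ℝ) (hr : |a| + 1 < r) (hMb : 0 ≤ Mb)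
    (F : ℂ → ℂ) (hF : DiffContOnCl ℂ F (ball 0 r))
    (hFb : ∀ z ∈ sphere (0:ℂ) r, ‖F z‖ ≤ Mb) :
    ‖(∑ ν ∈ Finset.range n, (∏ ν' ∈ (Finset.range n).erase ν,
        (((a - x ν') / (x ν - x ν') : ℝ) : ℂ)) * F (x ν)) - F a‖
      ≤ r * ((|a|+1)^n * ((r-1)^n)⁻¹ * (r - |a|)⁻¹ * Mb) := by
  have ha0 : (0:ℝ) ≤ |a| := abs_nonneg a
  have hr1 : (1:ℝ) < r := by linarith
  have hr0 : (0:ℝ) < r := by linarith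
  set c : ℕ → ℂ := fun ν => ∏ ν' ∈ (Finset.range n).erase ν,
      (((a:ℂ) - x ν') * ((x ν : ℂ) - x ν')⁻¹) with hc
  have hcast : ∀ ν, (∏ ν' ∈ (Finset.range n).erase ν,
      (((a - x ν') / (x ν - x ν') : ℝ) : ℂ)) = c ν := by
    intro ν
    refine Finset.prod_congr rfl fun ν' _ => ?_
    push_cast
    rw [div_eq_mul_inv]
  simp only [hcast]
  -- Cauchy integral formula
  have cauchy : ∀ w : ℂ, ‖w‖ < r →
      (∮ z in C(0, r), (z - w)⁻¹ * F z) = (2 * π * Complex.I) * F w := by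
    intro w hw
    have := hF.circleIntegral_sub_inv_smul (w := w) (by simpa [mem_ball_zero_iff] using hw)
    simpa [smul_eq_mul] using this
  -- continuity facts
  have hFc : ContinuousOn F (sphere (0:ℂ) r) :=
    (hF.continuousOn_ball).mono sphere_subset_closedBall
  have hns : ∀ w : ℂ, ‖w‖ < r → ∀ z ∈ sphere (0:ℂ) r, z - w ≠ 0 := by
    intro w hw z hzs
    rw [mem_sphere_zero_iff_norm] at hzs
    intro h0
    rw [sub_eq_zero] at h0
    rw [h0] at hzs; rw [hzs] at hw; exact lt_irrefl _ hw
  have hinvc : ∀ w : ℂ, ‖w‖ < r → ContinuousOn (fun z => (z - w)⁻¹ * F z) (sphere (0:ℂ) r) := by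
    intro w hw
    exact (((continuous_id.sub continuous_const).continuousOn).inv₀ (hns w hw)).mul hFc
  have hxa : ∀ ν ∈ Finset.range n, ‖((x ν : ℂ))‖ < r := by
    intro ν hν
    rw [Complex.norm_real]
    calc ‖x ν‖ ≤ 1 := hx ν hν
    _ < r := hr1
  have haa : ‖((a : ℂ))‖ < r := by
    rw [Complex.norm_real, Real.norm_eq_abs]; linarith
  -- split the integral
  set g : ℂ → ℂ := fun z => ((∑ ν ∈ Finset.range n, c ν * (z - (x ν : ℂ))⁻¹) - (z - (a:ℂ))⁻¹) * F z
    with hg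
  have hsplit : (∮ z in C(0, r), g z)
      = (2 * π * Complex.I) * ((∑ ν ∈ Finset.range n, c ν * F (x ν)) - F a) := by
    have hgz : ∀ z : ℂ, g z = (∑ ν ∈ Finset.range n, c ν * ((z - (x ν : ℂ))⁻¹ * F z))
        - (z - (a:ℂ))⁻¹ * F z := by
      intro z
      simp only [hg, sub_mul, Finset.sum_mul, mul_assoc]
    simp only [hgz]
    rw [circleIntegral.integral_sub, circleIntegral_finset_sum]
    · have : ∀ ν ∈ Finset.range n, (∮ z in C(0,r), c ν * ((z - (x ν : ℂ))⁻¹ * F z))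
          = c ν * ((2 * π * Complex.I) * F (x ν)) := by
        intro ν hν
        have h1 : (∮ z in C(0,r), c ν • ((z - ((x ν : ℝ) : ℂ))⁻¹ * F z))
            = c ν • ∮ z in C(0,r), (z - ((x ν : ℝ) : ℂ))⁻¹ * F z :=
          circleIntegral.integral_smul _ _ _ _
        simp only [smul_eq_mul] at h1
        rw [h1, cauchy _ (hxa ν hν)]
      rw [Finset.sum_congr rfl this, cauchy _ haa, mul_sub, Finset.mul_sum]
      exact congrArg₂ Sub.sub (Finset.sum_congr rfl fun ν _ => by ring) rfl
    · intro ν hν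
      exact ContinuousOn.circleIntegrable hr0.le
        ((continuousOn_const.mul (hinvc _ (hxa ν hν))))
    · exact ContinuousOn.circleIntegrable hr0.le <|
        continuousOn_finset_sum _ fun ν hν => continuousOn_const.mul (hinvc _ (hxa ν hν))
    · exact ContinuousOn.circleIntegrable hr0.le (hinvc _ haa)
  -- pointwise bound on the circle
  set Cb : ℝ := (|a|+1)^n * ((r-1)^n)⁻¹ * (r - |a|)⁻¹ * Mb with hCb
  have hgb : ∀ z ∈ sphere (0:ℂ) r, ‖g z‖ ≤ Cb := by
    intro z hzs
    have hzn : ‖z‖ = r := mem_sphere_zero_iff_norm.1 hzs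
    have hz1 : ∀ ν ∈ Finset.range n, z ≠ ((x ν : ℂ)) := by
      intro ν hν heq
      have := hxa ν hν
      rw [← heq, hzn] at this; exact lt_irrefl _ this
    have hza : z ≠ ((a:ℂ)) := by
      intro heq; rw [← heq, hzn] at haa; exact lt_irrefl _ haa
    have hkey := key_ident n (fun ν => ((x ν : ℂ))) hinj
      (by simpa [Finset.nonempty_range_iff] using hn.ne') ((a:ℂ)) z hz1 hza
    have : g z = -((∏ ν ∈ Finset.range n, (((a:ℂ)) - x ν)) *
        (∏ ν ∈ Finset.range n, (z - (x ν : ℂ)))⁻¹ * (z - (a:ℂ))⁻¹) * F z := by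
      rw [hg]; rw [← hkey]
    rw [this]
    rw [norm_mul, norm_neg, norm_mul, norm_mul, norm_inv, norm_inv, norm_prod, norm_prod]
    have h1 : ∏ ν ∈ Finset.range n, ‖((a:ℂ)) - (x ν : ℂ)‖ ≤ (|a|+1)^n := by
      have : (|a|+1)^n = ∏ _ν ∈ Finset.range n, (|a|+1) := by
        rw [Finset.prod_const, Finset.card_range]
      rw [this]
      refine Finset.prod_le_prod (fun _ _ => norm_nonneg _) fun ν hν => ?_
      calc ‖((a:ℂ)) - (x ν : ℂ)‖ ≤ ‖((a:ℂ))‖ + ‖((x ν : ℂ))‖ := norm_sub_le _ _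
        _ ≤ |a| + 1 := by
            rw [Complex.norm_real, Complex.norm_real, Real.norm_eq_abs, Real.norm_eq_abs]
            have := hx ν hν; linarith
    have h2 : (r-1)^n ≤ ∏ ν ∈ Finset.range n, ‖z - (x ν : ℂ)‖ := by
      have he : (r-1)^n = ∏ _ν ∈ Finset.range n, (r-1) := by
        rw [Finset.prod_const, Finset.card_range]
      rw [he]
      refine Finset.prod_le_prod (fun _ _ => by linarith) fun ν hν => ?_
      have : ‖z‖ - ‖((x ν : ℂ))‖ ≤ ‖z - ((x ν : ℂ))‖ := norm_sub_norm_le _ _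
      rw [hzn, Complex.norm_real, Real.norm_eq_abs] at this
      have := hx ν hν
      linarith [hx ν hν]
    have h3 : r - |a| ≤ ‖z - ((a:ℂ))‖ := by
      have : ‖z‖ - ‖((a:ℂ))‖ ≤ ‖z - ((a:ℂ))‖ := norm_sub_norm_le _ _
      rw [hzn, Complex.norm_real, Real.norm_eq_abs] at this
      linarith
    have hp1 : (0:ℝ) < (r-1)^n := pow_pos (by linarith) n
    have hp3 : (0:ℝ) < r - |a| := by linarith
    have e2 : (∏ ν ∈ Finset.range n, ‖z - (x ν : ℂ)‖)⁻¹ ≤ ((r-1)^n)⁻¹ :=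
      inv_anti₀ hp1 h2
    have e3 : ‖z - ((a:ℂ))‖⁻¹ ≤ (r - |a|)⁻¹ :=
      inv_anti₀ hp3 h3
    have q0 : (0:ℝ) ≤ (|a|+1)^n := pow_nonneg (by linarith) n
    have q1 : (0:ℝ) ≤ (|a|+1)^n * ((r-1)^n)⁻¹ := mul_nonneg q0 (inv_nonneg.2 hp1.le)
    have q2 : (0:ℝ) ≤ (|a|+1)^n * ((r-1)^n)⁻¹ * (r-|a|)⁻¹ := mul_nonneg q1 (inv_nonneg.2 hp3.le)
    rw [hCb]
    exact mul_le_mul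
      (mul_le_mul
        (mul_le_mul h1 e2 (inv_nonneg.2 (Finset.prod_nonneg fun _ _ => norm_nonneg _)) q0)
        e3 (inv_nonneg.2 (norm_nonneg _)) q1)
      (hFb z hzs) (norm_nonneg _) q2
  have hnorm := circleIntegral.norm_integral_le_of_norm_le_const hr0.le hgb
  rw [hsplit] at hnorm
  rw [norm_mul] at hnorm
  have h2pi : ‖(2 * ↑π * Complex.I : ℂ)‖ = 2 * π := by
    simp [Complex.norm_I, abs_of_nonneg Real.pi_pos.le]
  rw [h2pi] at hnorm
  have hpi : (0:ℝ) < 2 * π := by positivity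
  calc ‖(∑ ν ∈ Finset.range n, c ν * F ((x ν : ℂ))) - F ((a:ℂ))‖
      = (2 * π * ‖(∑ ν ∈ Finset.range n, c ν * F ((x ν : ℂ))) - F ((a:ℂ))‖) / (2 * π) :=
        (mul_div_cancel_left₀ _ (by positivity : (2*π:ℝ) ≠ 0)).symm
    _ ≤ (2 * π * r * Cb) / (2 * π) := by gcongr
    _ = r * Cb := by field_simp

set_option maxHeartbeats 1000000 in

/-- (Example 3.2) Lagrange-type superoscillating sequences in several variables:
uniform convergence on compacts of `V_{d,q,R}` of
`Σ_ν (∏_{ν'≠ν} (a - h(N,ν'))/(h(N,ν) - h(N,ν'))) ∏_ℓ G_ℓ(h(N,ν)^{q_ℓ} x_ℓ)`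
to `∏_ℓ G_ℓ(a^{q_ℓ} x_ℓ)`. -/
theorem statement_8 (d : ℕ) (hd : 1 ≤ d) (q : Fin d → ℕ) (hq : ∀ ℓ, 1 ≤ q ℓ)
    (Rad : Fin d → ℝ) (hRad : ∀ ℓ, 0 < Rad ℓ)
    (G : Fin d → ℂ → ℂ)
    (hG : ∀ ℓ, DifferentiableOn ℂ (G ℓ) (Metric.ball (0 : ℂ) (Rad ℓ)))
    (h : ℕ → ℕ → ℝ)
    (hmem : ∀ N : ℕ, 1 ≤ N → ∀ ν ≤ N, h N ν ∈ Set.Icc (-1 : ℝ) 1)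
    (hmono : ∀ N : ℕ, 1 ≤ N → ∀ ν ν' : ℕ, ν < ν' → ν' ≤ N → h N ν < h N ν')
    (K : Set (ℝ × (Fin d → ℝ))) (hK : IsCompact K)
    (hKV : K ⊆ {p : ℝ × (Fin d → ℝ) | ∀ ℓ, (|p.1| + 2) ^ (q ℓ) * |p.2 ℓ| < Rad ℓ}) :
    ∀ ε > 0, ∃ M : ℕ, ∀ N : ℕ, 1 ≤ N → M ≤ N → ∀ p ∈ K,
      ‖(∑ ν ∈ Finset.range (N + 1),
          (∏ ν' ∈ (Finset.range (N + 1)).erase ν,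
            (((p.1 - h N ν') / (h N ν - h N ν') : ℝ) : ℂ)) *
            ∏ ℓ, G ℓ ((h N ν ^ (q ℓ) * p.2 ℓ : ℝ))) -
        ∏ ℓ, G ℓ ((p.1 ^ (q ℓ) * p.2 ℓ : ℝ))‖ < ε := by
  intro ε hε
  rcases Set.eq_empty_or_nonempty K with hKe | ⟨p₀, hp₀⟩
  · exact ⟨0, fun N _ _ p hp => absurd hp (by rw [hKe]; exact Set.notMem_empty p)⟩
  -- bound on |a|
  obtain ⟨A₀, hA₀⟩ := hK.exists_bound_of_continuousOn continuous_fst.continuousOn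
  set A : ℝ := max A₀ 0 with hAdef
  have hA : ∀ p ∈ K, |p.1| ≤ A := fun p hp => le_trans (hA₀ p hp) (le_max_left _ _)
  have hA0 : (0:ℝ) ≤ A := le_max_right _ _
  -- bound B ℓ
  have hBex : ∀ ℓ, ∃ B : ℝ, 0 ≤ B ∧ B < Rad ℓ ∧
      ∀ p ∈ K, (|p.1|+2)^(q ℓ) * |p.2 ℓ| ≤ B := by
    intro ℓ
    have hcont : ContinuousOn (fun p : ℝ × (Fin d → ℝ) => (|p.1|+2)^(q ℓ) * |p.2 ℓ|) K := by
      apply Continuous.continuousOn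
      fun_prop
    obtain ⟨p₁, hp₁K, hp₁⟩ := hK.exists_isMaxOn ⟨p₀, hp₀⟩ hcont
    exact ⟨(|p₁.1|+2)^(q ℓ) * |p₁.2 ℓ|, by positivity, hKV hp₁K ℓ, fun p hp => hp₁ hp⟩
  choose B hB0 hBR hBle using hBex
  -- margin t
  obtain ⟨t, htpos, ht⟩ : ∃ t : ℝ, 0 < t ∧ ∀ ℓ, ((2+t)/2)^(q ℓ) * B ℓ < Rad ℓ := by
    have hev : ∀ᶠ t in nhdsWithin (0:ℝ) (Set.Ioi 0), ∀ ℓ, ((2+t)/2)^(q ℓ) * B ℓ < Rad ℓ := by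
      rw [Filter.eventually_all]
      intro ℓ
      have hcw : ContinuousWithinAt (fun s : ℝ => ((2+s)/2)^(q ℓ) * B ℓ)
          (Set.Ioi 0) 0 := by
        apply Continuous.continuousWithinAt
        fun_prop
      have hcw2 : Filter.Tendsto (fun s : ℝ => ((2+s)/2)^(q ℓ) * B ℓ)
          (nhdsWithin (0:ℝ) (Set.Ioi 0)) (nhds (B ℓ)) := by
        have : ((2+(0:ℝ))/2)^(q ℓ) * B ℓ = B ℓ := by norm_num
        simpa [ContinuousWithinAt, this] using hcw
      exact hcw2.eventually_lt_const (hBR ℓ)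
    obtain ⟨t, h1, h2⟩ := (hev.and self_mem_nhdsWithin).exists
    exact ⟨t, h2, h1⟩
  set rr : Fin d → ℝ := fun ℓ => ((2+t)/2)^(q ℓ) * B ℓ with hrrdef
  have hrr0 : ∀ ℓ, 0 ≤ rr ℓ := fun ℓ => mul_nonneg (by positivity) (hB0 ℓ)
  -- bound on G
  have hCex : ∀ ℓ, ∃ C : ℝ, 1 ≤ C ∧ ∀ w : ℂ, ‖w‖ ≤ rr ℓ → ‖G ℓ w‖ ≤ C := by
    intro ℓ
    have hsub : Metric.closedBall (0:ℂ) (rr ℓ) ⊆ Metric.ball 0 (Rad ℓ) :=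
      Metric.closedBall_subset_ball (ht ℓ)
    have hGc : ContinuousOn (G ℓ) (Metric.closedBall 0 (rr ℓ)) :=
      ((hG ℓ).mono hsub).continuousOn
    obtain ⟨C, hC⟩ := (isCompact_closedBall _ _).exists_bound_of_continuousOn hGc
    refine ⟨max C 1, le_max_right _ _, fun w hw => le_trans (hC w ?_) (le_max_left _ _)⟩
    simpa [Metric.mem_closedBall, dist_eq_norm] using hw
  choose Cg hCg1 hCgb using hCex
  set Mb : ℝ := ∏ ℓ, Cg ℓ with hMbdef
  have hMb1 : (1:ℝ) ≤ Mb := by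
    rw [hMbdef]
    calc (1:ℝ) = ∏ _ℓ : Fin d, (1:ℝ) := by simp
    _ ≤ ∏ ℓ, Cg ℓ := Finset.prod_le_prod (fun _ _ => zero_le_one) (fun ℓ _ => hCg1 ℓ)
  have hMb0 : (0:ℝ) ≤ Mb := by linarith
  -- geometric quantities
  set θ : ℝ := (A+1)/(A+1+t) with hθdef
  have hθ0 : 0 ≤ θ := by positivity
  have hθ1 : θ < 1 := by
    rw [hθdef, div_lt_one (by linarith)]; linarith
  set Cst : ℝ := (A+2+t) * Mb / (2+t) with hCstdef
  have hCst0 : 0 ≤ Cst := by positivity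
  have hev : ∀ᶠ N : ℕ in Filter.atTop, Cst * θ^(N+1) < ε := by
    have h1 : Filter.Tendsto (fun N : ℕ => θ^(N+1)) Filter.atTop (nhds 0) :=
      (tendsto_pow_atTop_nhds_zero_of_lt_one hθ0 hθ1).comp (Filter.tendsto_add_atTop_nat 1)
    have h2 := h1.const_mul Cst
    rw [mul_zero] at h2
    exact h2.eventually_lt_const hε
  obtain ⟨M, hM⟩ := Filter.eventually_atTop.1 hev
  refine ⟨M, fun N hN1 hMN p hpK => ?_⟩
  -- set up per-point data
  set a : ℝ := p.1 with hadef
  set r : ℝ := |a| + 2 + t with hrdef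
  have hr1a : |a| + 1 < r := by rw [hrdef]; linarith
  have hr0 : (0:ℝ) < r := by have := abs_nonneg a; rw [hrdef]; linarith
  set F : ℂ → ℂ := fun z => ∏ ℓ, G ℓ (z ^ (q ℓ) * ((p.2 ℓ : ℝ) : ℂ)) with hFdef
  -- the argument bound
  have harg : ∀ z : ℂ, ‖z‖ ≤ r → ∀ ℓ, ‖z ^ (q ℓ) * ((p.2 ℓ : ℝ) : ℂ)‖ ≤ rr ℓ := by
    intro z hz ℓ
    rw [norm_mul, norm_pow, Complex.norm_real, Real.norm_eq_abs]
    calc ‖z‖ ^ (q ℓ) * |p.2 ℓ| ≤ r ^ (q ℓ) * |p.2 ℓ| := by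
          apply mul_le_mul_of_nonneg_right _ (abs_nonneg _)
          exact pow_le_pow_left₀ (norm_nonneg z) hz _
      _ ≤ ((2+t)/2 * (|a|+2)) ^ (q ℓ) * |p.2 ℓ| := by
          apply mul_le_mul_of_nonneg_right _ (abs_nonneg _)
          apply pow_le_pow_left₀ hr0.le
          rw [hrdef]
          nlinarith [abs_nonneg a, htpos]
      _ = ((2+t)/2) ^ (q ℓ) * ((|a|+2) ^ (q ℓ) * |p.2 ℓ|) := by rw [mul_pow]; ring
      _ ≤ ((2+t)/2) ^ (q ℓ) * B ℓ := by
          apply mul_le_mul_of_nonneg_left _ (by positivity)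
          exact hBle ℓ p hpK
      _ = rr ℓ := rfl
  -- differentiability
  have hFdiff : DifferentiableOn ℂ F (Metric.closedBall 0 r) := by
    apply DifferentiableOn.fun_finset_prod
    intro ℓ _
    apply DifferentiableOn.comp (hG ℓ)
    · exact ((differentiable_pow (q ℓ)).mul_const _).differentiableOn
    · intro z hz
      rw [Metric.mem_closedBall, dist_zero_right] at hz
      rw [Metric.mem_ball, dist_zero_right]
      exact lt_of_le_of_lt (harg z hz ℓ) (ht ℓ)
  have hF : DiffContOnCl ℂ F (Metric.ball 0 r) := by
    apply DifferentiableOn.diffContOnCl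
    rwa [closure_ball (0:ℂ) hr0.ne']
  -- bound on F
  have hFb : ∀ z ∈ Metric.sphere (0:ℂ) r, ‖F z‖ ≤ Mb := by
    intro z hz
    rw [mem_sphere_zero_iff_norm] at hz
    rw [hFdef, hMbdef]
    rw [norm_prod]
    refine Finset.prod_le_prod (fun _ _ => norm_nonneg _) fun ℓ _ => ?_
    exact hCgb ℓ _ (harg z hz.le ℓ)
  -- node facts
  have hx : ∀ ν ∈ Finset.range (N+1), |h N ν| ≤ 1 := by
    intro ν hν
    rw [Finset.mem_range, Nat.lt_succ_iff] at hν
    have := hmem N hN1 ν hν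
    rw [Set.mem_Icc] at this
    exact abs_le.2 this
  have hinj : Set.InjOn (fun ν : ℕ => ((h N ν : ℝ) : ℂ)) (Finset.range (N+1)) := by
    intro i hi j hj hij
    rw [Finset.coe_range, Set.mem_Iio] at hi hj
    have hij' : h N i = h N j := by
      have : ((h N i : ℝ) : ℂ) = ((h N j : ℝ) : ℂ) := hij
      exact_mod_cast this
    by_contra hne
    rcases Nat.lt_or_ge i j with hlt | hge
    · exact absurd hij' (ne_of_lt (hmono N hN1 i j hlt (Nat.lt_succ_iff.1 hj)))
    · have hlt : j < i := lt_of_le_of_ne hge (Ne.symm hne)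
      exact absurd hij'.symm (ne_of_lt (hmono N hN1 j i hlt (Nat.lt_succ_iff.1 hi)))
  -- apply the core estimate
  have hcore := core_est (N+1) (Nat.succ_pos N) (h N) hx hinj a r Mb hr1a hMb0 F hF hFb
  -- rewrite the goal to match
  have hgoal : (∑ ν ∈ Finset.range (N + 1),
      (∏ ν' ∈ (Finset.range (N + 1)).erase ν,
        (((p.1 - h N ν') / (h N ν - h N ν') : ℝ) : ℂ)) *
        ∏ ℓ, G ℓ ((h N ν ^ (q ℓ) * p.2 ℓ : ℝ))) -
      ∏ ℓ, G ℓ ((p.1 ^ (q ℓ) * p.2 ℓ : ℝ))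
      = (∑ ν ∈ Finset.range (N+1), (∏ ν' ∈ (Finset.range (N+1)).erase ν,
        (((a - h N ν') / (h N ν - h N ν') : ℝ) : ℂ)) * F ((h N ν : ℝ) : ℂ)) - F ((a : ℝ) : ℂ) := by
    rw [hFdef]
    simp only [Complex.ofReal_mul, Complex.ofReal_pow, hadef]
  rw [hgoal]
  -- final numeric estimate
  have hstep : r * ((|a|+1)^(N+1) * ((r-1)^(N+1))⁻¹ * (r - |a|)⁻¹ * Mb) ≤ Cst * θ^(N+1) := by
    have hra : r - 1 = |a| + 1 + t := by rw [hrdef]; ring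
    have hrb : r - |a| = 2 + t := by rw [hrdef]; ring
    have hpos1 : (0:ℝ) < |a| + 1 + t := by have := abs_nonneg a; linarith
    have hratio : (|a|+1)/(|a|+1+t) ≤ θ := by
      rw [hθdef, div_le_div_iff₀ hpos1 (by linarith)]
      have haA := hA p hpK
      nlinarith [abs_nonneg a]
    have heq : r * ((|a|+1)^(N+1) * ((r-1)^(N+1))⁻¹ * (r - |a|)⁻¹ * Mb)
        = ((|a|+2+t) * Mb / (2+t)) * ((|a|+1)/(|a|+1+t))^(N+1) := by
      rw [hra, hrb, hrdef, div_pow]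
      field_simp
    rw [heq, hCstdef]
    have h1 : (|a|+2+t) * Mb / (2+t) ≤ (A+2+t) * Mb / (2+t) := by
      have hx2 : (|a| + 2 + t) * Mb ≤ (A + 2 + t) * Mb :=
        mul_le_mul_of_nonneg_right (by have := hA p hpK; linarith) hMb0
      exact (div_le_div_iff_of_pos_right (by linarith)).2 hx2
    have h2 : ((|a|+1)/(|a|+1+t))^(N+1) ≤ θ^(N+1) :=
      pow_le_pow_left₀ (by positivity) hratio _
    exact mul_le_mul h1 h2 (by positivity) (by positivity)
  calc ‖(∑ ν ∈ Finset.range (N+1), (∏ ν' ∈ (Finset.range (N+1)).erase ν,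
        (((a - h N ν') / (h N ν - h N ν') : ℝ) : ℂ)) * F ((h N ν : ℝ) : ℂ)) - F ((a : ℝ) : ℂ)‖
      ≤ r * ((|a|+1)^(N+1) * ((r-1)^(N+1))⁻¹ * (r - |a|)⁻¹ * Mb) := hcore
    _ ≤ Cst * θ^(N+1) := hstep
    _ < ε := hM N hMN
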